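/- Let H be a Hopf algebra over k and (V,Y,1,s) an H-module field algebra, and equip V⊗H with the field algebra structure Y_H(a⊗h,z)(b⊗g) = Σ_{n∈Z} a_n(h_1 b) ⊗ h_2 g · z^{−n−1}, vacuum 1⊗1, s(a⊗h) = sa⊗h. Then the map Y^V(a⊗h,z)b := Y(a,z)(hb) makes (V, Y^V, s) a left module over the field algebra (V⊗H, Y_H, 1⊗1); in particular (V,Y,s) is a left module over the field algebra (V^H, Y, 1, s). -/
import Mathlib


open scoped TensorProduct DirectSum

namespace HopfVA

/-- Generalized binomial coefficient `C(r, j)` for an integer `r` (exact division). -/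
def ibinom (r : ℤ) (j : ℕ) : ℤ := (∏ i ∈ Finset.range j, (r - (i : ℤ))) / (j.factorial : ℤ)

/-- `(-1)^q` for an integer exponent `q`. -/
def negOnePow (q : ℤ) : ℤ := if Even q then 1 else -1

section Core

variable {k : Type*} [CommRing k] {V : Type*} [AddCommGroup V] [Module k V]

/-- If `f p q` is the coefficient of `z^p w^q` of a two-variable formal distribution,
then `zwMul n f p q` is the coefficient of `z^p w^q` of `(z-w)^n` times that distribution. -/
def zwMul (n : ℕ) (f : ℤ → ℤ → V) : ℤ → ℤ → V := fun p q =>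
  ∑ i ∈ Finset.range (n + 1),
    ((-1 : ℤ) ^ i * (n.choose i : ℤ)) • f (p - ((n : ℤ) - (i : ℤ))) (q - (i : ℤ))

/-- The data of a state-field correspondence on a pointed vector space:
`Y a n b` is the `n`-th product `a_n b` (so that `Y(a,z)b = ∑ (a_n b) z^{-n-1}`),
`vac` is the vacuum vector and `T` is the translation operator. -/
structure VAData (k V : Type*) [CommRing k] [AddCommGroup V] [Module k V] where
  Y : V →ₗ[k] ℤ → Module.End k V
  vac : V
  T : Module.End k V

namespace VAData

variable (F : VAData k V)

/-- coefficient of `z^p w^q` in `Y(a,z)Y(b,w)c`. -/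
def prodZW (a b c : V) : ℤ → ℤ → V := fun p q => F.Y a (-p - 1) (F.Y b (-q - 1) c)

/-- coefficient of `z^p w^q` in `Y(b,w)Y(a,z)c`. -/
def prodWZ (a b c : V) : ℤ → ℤ → V := fun p q => F.Y b (-q - 1) (F.Y a (-p - 1) c)

/-- coefficient of `z^p w^q` in `i_{z,w} Y(a,z-w)Y(b,-w)c`. -/
noncomputable def compLHS (a b c : V) : ℤ → ℤ → V := fun p q =>
  negOnePow q •
    ∑ᶠ j : ℕ, ibinom (p + (j : ℤ)) j • F.Y a (-p - 1 - (j : ℤ)) (F.Y b ((j : ℤ) - 1 - q) c)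

/-- Truncated (at `j < J`) version of `compLHS`, for `h`-adic statements. -/
def compLHStr (J : ℕ) (a b c : V) : ℤ → ℤ → V := fun p q =>
  negOnePow q •
    ∑ j ∈ Finset.range J, ibinom (p + (j : ℤ)) j • F.Y a (-p - 1 - (j : ℤ)) (F.Y b ((j : ℤ) - 1 - q) c)

/-- coefficient of `z^p w^q` in `Y(Y(a,z)b,-w)c`. -/
def compRHS (a b c : V) : ℤ → ℤ → V := fun p q =>
  negOnePow q • F.Y (F.Y a (-p - 1) b) (-q - 1) c

/-- The axioms of a state-field correspondence: truncation, the vacuum axioms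
`Y(1,z)a = a`, `Y(a,z)1 = a + (Ta)z + ⋯ ∈ V[[z]]`, and translation covariance
`[T, Y(a,z)] = Y(Ta,z) = ∂_z Y(a,z)`. -/
def IsStateField : Prop :=
  (∀ a b : V, ∃ N : ℤ, ∀ n : ℤ, N ≤ n → F.Y a n b = 0) ∧
  (∀ (a : V) (n : ℤ), F.Y F.vac n a = if n = -1 then a else 0) ∧
  (∀ (a : V) (n : ℤ), 0 ≤ n → F.Y a n F.vac = 0) ∧
  (∀ a : V, F.Y a (-1) F.vac = a) ∧
  (∀ a : V, F.Y a (-2) F.vac = F.T a) ∧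
  (∀ (a b : V) (n : ℤ), F.Y (F.T a) n b = F.T (F.Y a n b) - F.Y a n (F.T b)) ∧
  (∀ (a b : V) (n : ℤ), F.Y (F.T a) n b = (-n : ℤ) • F.Y a (n - 1) b)

/-- The associativity relation
`(z-w)^N i_{z,w} Y(a,z-w)Y(b,-w)c = (z-w)^N Y(Y(a,z)b,-w)c`. -/
def IsAssocFA : Prop := ∀ a b c : V, ∃ N : ℕ, ∀ p q : ℤ,
  zwMul N (F.compLHS a b c) p q = zwMul N (F.compRHS a b c) p q

/-- A field algebra is a state-field correspondence satisfying associativity. -/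
def IsFieldAlgebra : Prop := F.IsStateField ∧ F.IsAssocFA

/-- `(z-w)^n [Y(a,z), Y(b,w)] = 0`. -/
def IsLocalPair (a b : V) : Prop :=
  ∃ n : ℕ, ∀ (c : V) (p q : ℤ), zwMul n (F.prodZW a b c) p q = zwMul n (F.prodWZ a b c) p q

/-- A vertex algebra is a field algebra all of whose pairs of fields are local. -/
def IsVertexAlgebra : Prop := F.IsFieldAlgebra ∧ ∀ a b : V, F.IsLocalPair a b

/-- `(z-w)^n Y(a,z)Y(b,w) = (z-w)^n ∑ᵢ Y(bⁱ,w)Y(aⁱ,z)`. -/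
def IsSLocalPair (a b : V) : Prop :=
  ∃ (n m : ℕ) (A B : Fin m → V), ∀ (c : V) (p q : ℤ),
    zwMul n (F.prodZW a b c) p q = ∑ i, zwMul n (F.prodWZ (A i) (B i) c) p q

/-- An `S`-local vertex algebra is a field algebra all of whose pairs of fields
are `S`-local. -/
def IsSLocalVA : Prop := F.IsFieldAlgebra ∧ ∀ a b : V, F.IsSLocalPair a b

end VAData

/-- Data of a module over a field algebra: the module fields `Y^M` and translation `sM`. -/
structure VModData (k V M : Type*) [CommRing k] [AddCommGroup V] [Module k V]
    [AddCommGroup M] [Module k M] where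
  YM : V →ₗ[k] ℤ → Module.End k M
  sM : Module.End k M

namespace VModData

variable {M : Type*} [AddCommGroup M] [Module k M]

/-- coefficient of `z^p w^q` in `Y^M(a,z)Y^M(b,w)x`. -/
def mprodZW (Mo : VModData k V M) (a b : V) (x : M) : ℤ → ℤ → M := fun p q =>
  Mo.YM a (-p - 1) (Mo.YM b (-q - 1) x)

/-- coefficient of `z^p w^q` in `Y^M(b,w)Y^M(a,z)x`. -/
def mprodWZ (Mo : VModData k V M) (a b : V) (x : M) : ℤ → ℤ → M := fun p q =>
  Mo.YM b (-q - 1) (Mo.YM a (-p - 1) x)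

/-- coefficient of `z^p w^q` in `i_{z,w} Y^M(a,z-w)Y^M(b,-w)x`. -/
noncomputable def mcompLHS (Mo : VModData k V M) (a b : V) (x : M) : ℤ → ℤ → M := fun p q =>
  negOnePow q •
    ∑ᶠ j : ℕ, ibinom (p + (j : ℤ)) j • Mo.YM a (-p - 1 - (j : ℤ)) (Mo.YM b ((j : ℤ) - 1 - q) x)

/-- coefficient of `z^p w^q` in `Y^M(Y(a,z)b,-w)x`. -/
def mcompRHS (F : VAData k V) (Mo : VModData k V M) (a b : V) (x : M) : ℤ → ℤ → M := fun p q =>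
  negOnePow q • Mo.YM (F.Y a (-p - 1) b) (-q - 1) x

/-- `M` is a left module over the field algebra `F`: truncation, vacuum, translation
invariance and the associativity axiom. -/
def IsModule (F : VAData k V) (Mo : VModData k V M) : Prop :=
  (∀ (a : V) (x : M), ∃ N : ℤ, ∀ n : ℤ, N ≤ n → Mo.YM a n x = 0) ∧
  (∀ (x : M) (n : ℤ), Mo.YM F.vac n x = if n = -1 then x else 0) ∧
  (∀ (a : V) (x : M) (n : ℤ),
      Mo.sM (Mo.YM a n x) - Mo.YM a n (Mo.sM x) = (-n : ℤ) • Mo.YM a (n - 1) x) ∧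
  (∀ (a b : V) (x : M), ∃ N : ℕ, ∀ p q : ℤ,
      zwMul N (mcompLHS Mo a b x) p q = zwMul N (mcompRHS F Mo a b x) p q)

/-- Locality of the module fields `Y^M(a,z)`, `Y^M(b,w)`. -/
def IsLocalModPair (Mo : VModData k V M) (a b : V) : Prop :=
  ∃ n : ℕ, ∀ (x : M) (p q : ℤ),
    zwMul n (mprodZW Mo a b x) p q = zwMul n (mprodWZ Mo a b x) p q

/-- `S`-locality of the module fields. -/
def IsSLocalModPair (Mo : VModData k V M) (a b : V) : Prop :=
  ∃ (n m : ℕ) (A B : Fin m → V), ∀ (x : M) (p q : ℤ),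
    zwMul n (mprodZW Mo a b x) p q = ∑ i, zwMul n (mprodWZ Mo (A i) (B i) x) p q

end VModData

/-- The `f`-product `a_(f) b = Res_z f(z) Y(a,z) b`, where `f n` is the coefficient
of `z^n` in `f`. -/
noncomputable def fProduct (F : VAData k V) (f : ℤ → k) (a b : V) : V :=
  ∑ᶠ n : ℤ, f n • F.Y a n b

/-- Coefficients of the formal derivative `∂_z f`. -/
def derivCoef (f : ℤ → k) : ℤ → k := fun n => ((n : ℤ) + 1 : ℤ) • f (n + 1)

/-- The subspace `V_(g) V` spanned by all products `a_(g) b` with `g = ∂_z f`. -/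
noncomputable def gSpan (F : VAData k V) (f : ℤ → k) : Submodule k V :=
  Submodule.span k {x : V | ∃ a b : V, x = fProduct F (derivCoef f) a b}

/-- `x ≡ y mod h^M`, where `h = r`. -/
def ModH (r : k) (M : ℕ) (x y : V) : Prop := ∃ v : V, x - y = r ^ M • v

/-- An automorphism of the (state-field data of a) vertex algebra `F`. -/
def IsVAAut (F : VAData k V) (φ : V ≃ₗ[k] V) : Prop :=
  φ F.vac = F.vac ∧ (∀ v : V, φ (F.T v) = F.T (φ v)) ∧
  ∀ (a b : V) (n : ℤ), φ (F.Y a n b) = F.Y (φ a) n (φ b)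

end Core

/-- The coefficients of `f(z) = z⁻¹`. -/
def zinvCoef (k : Type*) [CommRing k] : ℤ → k := fun n => if n = -1 then 1 else 0

/-- The coefficients of `f(z) = c·e^{cz}/(e^{cz}-1)
  = z⁻¹ + c + ∑_{m≥1} B_m c^m z^{m-1}/m!` (Bernoulli numbers `B_m`). -/
noncomputable def berCoef {k : Type*} [Field k] [CharZero k] (c : k) : ℤ → k := fun n =>
  if n < -1 then 0
  else ((bernoulli (n + 1).toNat : ℚ) • (c ^ (n + 1).toNat)) / ((n + 1).toNat.factorial : k)
        + (if n = 0 then c else 0)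

/-- `f(z) = z⁻¹` or `f(z) = c·e^{cz}/(e^{cz}-1)` with `c ≠ 0`. -/
def AdmissibleF {k : Type*} [Field k] [CharZero k] (f : ℤ → k) : Prop :=
  f = zinvCoef k ∨ ∃ c : k, c ≠ 0 ∧ f = berCoef c

section HopfDefs

variable {k : Type*} [CommRing k] {V : Type*} [AddCommGroup V] [Module k V]
variable (H : Type*) [Ring H] [HopfAlgebra k H]

/-- `V` is an `H`-module field algebra: `h·1 = ε(h)1`, `h(Ta) = T(ha)` and
`h(aₙb) = ∑ (h₁a)ₙ(h₂b)` (the last condition quantified over all finite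
representations of `Δ(h)`). -/
def IsHModuleFA [Module H V] [IsScalarTower k H V] (F : VAData k V) : Prop :=
  (∀ h : H, h • F.vac = (Coalgebra.counit (R := k) h) • F.vac) ∧
  (∀ (h : H) (a : V), h • (F.T a : V) = F.T (h • a)) ∧
  (∀ (h : H) (a b : V) (n : ℤ) (m : ℕ) (h1 h2 : Fin m → H),
      Coalgebra.comul (R := k) h = ∑ i, h1 i ⊗ₜ[k] h2 i →
      h • (F.Y a n b : V) = ∑ i, F.Y (h1 i • a) n (h2 i • b))

/-- The smash product structure `V # H` on `V ⊗ H`: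
`Y(a#h,z)(b#g) = ∑ Y(a,z)(h₁b) # h₂g`, vacuum `1#1`, translation `T#1`. -/
def SmashChar [Module H V] [IsScalarTower k H V] (F : VAData k V)
    (FS : VAData k (V ⊗[k] H)) : Prop :=
  (∀ (a b : V) (h g : H) (n : ℤ) (m : ℕ) (h1 h2 : Fin m → H),
      Coalgebra.comul (R := k) h = ∑ i, h1 i ⊗ₜ[k] h2 i →
      FS.Y (a ⊗ₜ[k] h) n (b ⊗ₜ[k] g) = ∑ i, (F.Y a n (h1 i • b) : V) ⊗ₜ[k] (h2 i * g)) ∧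
  (FS.vac = F.vac ⊗ₜ[k] (1 : H)) ∧
  (∀ (a : V) (h : H), FS.T (a ⊗ₜ[k] h) = (F.T a : V) ⊗ₜ[k] h)

end HopfDefs

/-- The fixed point subspace `V^H = {v | h v = ε(h) v for all h}`. -/
def hFixed (k V H : Type*) [CommRing k] [AddCommGroup V] [Module k V]
    [Ring H] [HopfAlgebra k H] [Module H V] [IsScalarTower k H V]
    [SMulCommClass k H V] : Submodule k V where
  carrier := {v : V | ∀ h : H, h • v = (Coalgebra.counit (R := k) h) • v}
  add_mem' := by
    intro a b ha hb h
    rw [smul_add, ha h, hb h, ← smul_add]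
  zero_mem' := by
    intro h
    simp
  smul_mem' := by
    intro c v hv h
    rw [← smul_comm c h v, hv h, smul_smul, smul_smul, mul_comm]

section AuxZW

variable {k : Type*} [CommRing k] {V : Type*} [AddCommGroup V] [Module k V]

lemma zwMul_add (n : ℕ) (f g : ℤ → ℤ → V) (p q : ℤ) :
    zwMul n (fun p q => f p q + g p q) p q = zwMul n f p q + zwMul n g p q := by
  simp [zwMul, smul_add, Finset.sum_add_distrib]

lemma zwMul_sum {ι : Type*} (s : Finset ι) (n : ℕ) (f : ι → ℤ → ℤ → V) (p q : ℤ) :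
    zwMul n (fun p q => ∑ i ∈ s, f i p q) p q = ∑ i ∈ s, zwMul n (f i) p q := by
  simp only [zwMul, Finset.smul_sum]
  rw [Finset.sum_comm]

lemma zwMul_succ (n : ℕ) (f : ℤ → ℤ → V) (p q : ℤ) :
    zwMul (n + 1) f p q = zwMul n f (p - 1) q - zwMul n f p (q - 1) := by
  have A : zwMul (n + 1) f p q
      = ∑ i ∈ Finset.range (n + 2),
          (((-1 : ℤ) ^ i * (n.choose i : ℤ)) • f ((p - 1) - ((n : ℤ) - i)) (q - i)
            + ((-1 : ℤ) ^ i * (if i = 0 then 0 else (n.choose (i - 1) : ℤ))) •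
                f ((p - 1) - ((n : ℤ) - i)) (q - i)) := by
    unfold zwMul
    refine Finset.sum_congr (by norm_num) ?_
    intro i _
    have hc : (((n + 1).choose i : ℤ)) = (n.choose i : ℤ) + (if i = 0 then 0 else (n.choose (i - 1) : ℤ)) := by
      rcases i with _ | i
      · simp
      · simp only [Nat.choose_succ_succ, Nat.add_sub_cancel, if_neg (Nat.succ_ne_zero i)]
        push_cast; ring
    have harg : p - ((↑(n + 1) : ℤ) - i) = (p - 1) - ((n : ℤ) - i) := by push_cast; ring
    rw [harg, hc, mul_add, add_smul]
  rw [A, Finset.sum_add_distrib]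
  have B : ∑ i ∈ Finset.range (n + 2),
      ((-1 : ℤ) ^ i * (n.choose i : ℤ)) • f ((p - 1) - ((n : ℤ) - i)) (q - i)
      = zwMul n f (p - 1) q := by
    rw [Finset.sum_range_succ]
    simp [zwMul, Nat.choose_succ_self]
  have C : ∑ i ∈ Finset.range (n + 2),
      ((-1 : ℤ) ^ i * (if i = 0 then 0 else (n.choose (i - 1) : ℤ))) •
        f ((p - 1) - ((n : ℤ) - i)) (q - i)
      = - zwMul n f p (q - 1) := by
    rw [Finset.sum_range_succ']
    have hz : ((-1 : ℤ) ^ 0 * (if (0:ℕ) = 0 then (0:ℤ) else (n.choose (0 - 1) : ℤ))) •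
        f ((p - 1) - ((n : ℤ) - (0:ℕ))) (q - (0:ℕ)) = 0 := by
      simp
    rw [hz, add_zero]
    have : - zwMul n f p (q - 1)
        = ∑ i ∈ Finset.range (n + 1),
            -(((-1 : ℤ) ^ i * (n.choose i : ℤ)) • f (p - ((n : ℤ) - i)) ((q - 1) - i)) := by
      rw [Finset.sum_neg_distrib]
      rfl
    rw [this]
    refine Finset.sum_congr rfl ?_
    intro i _
    have h1 : (p - 1) - ((n : ℤ) - (↑(i + 1) : ℤ)) = p - ((n : ℤ) - i) := by push_cast; ring
    have h2 : q - (↑(i + 1) : ℤ) = (q - 1) - i := by push_cast; ring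
    have h3 : ((-1 : ℤ) ^ (i + 1) * (if i + 1 = 0 then 0 else (n.choose (i + 1 - 1) : ℤ)))
        = -((-1 : ℤ) ^ i * (n.choose i : ℤ)) := by
      rw [if_neg (Nat.succ_ne_zero i), Nat.add_sub_cancel, pow_succ]
      ring
    rw [h1, h2, h3, neg_smul]
  rw [B, C]
  abel

lemma zwMul_congr_of_le {n m : ℕ} (hnm : n ≤ m) {f g : ℤ → ℤ → V}
    (h : ∀ p q, zwMul n f p q = zwMul n g p q) : ∀ p q, zwMul m f p q = zwMul m g p q := by
  induction m, hnm using Nat.le_induction with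
  | base => exact h
  | succ m hm ih => intro p q; rw [zwMul_succ, zwMul_succ, ih, ih]

end AuxZW
section AuxSmash

variable {k : Type*} [CommRing k] {V : Type*} [AddCommGroup V] [Module k V]

/-- Finite `Fin`-indexed representation of a tensor. -/
lemma exists_fin_rep {R M N : Type*} [CommSemiring R] [AddCommMonoid M] [AddCommMonoid N]
    [Module R M] [Module R N] (x : M ⊗[R] N) :
    ∃ (m : ℕ) (f : Fin m → M) (g : Fin m → N), x = ∑ i, f i ⊗ₜ[R] g i := by
  obtain ⟨S, hS⟩ := TensorProduct.exists_finset x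
  refine ⟨S.card, fun i => ((S.equivFin.symm i : S) : M × N).1,
    fun i => ((S.equivFin.symm i : S) : M × N).2, ?_⟩
  rw [hS, ← Finset.sum_attach S (fun i => i.1 ⊗ₜ[R] i.2)]
  exact Fintype.sum_equiv S.equivFin _ _ (fun i => by simp)

section
variable {H : Type*} [Ring H] [Algebra k H]
variable [Module H V] [IsScalarTower k H V] [SMulCommClass k H V]

/-- `h • ·` as a `k`-linear endomorphism. -/
def hSmulLin (k : Type*) [CommRing k] {V : Type*} [AddCommGroup V] [Module k V]
    {H : Type*} [Ring H] [Module H V] [SMulCommClass k H V] (h : H) : V →ₗ[k] V where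
  toFun v := h • v
  map_add' := smul_add h
  map_smul' c v := (smul_comm c h v).symm

/-- The module fields `Y^V(a⊗h,z) b = Y(a,z)(h•b)`. -/
noncomputable def smashYM (F : VAData k V) : V ⊗[k] H →ₗ[k] ℤ → Module.End k V :=
  TensorProduct.lift <| LinearMap.mk₂ k
    (fun a h => fun n => (F.Y a n).comp (hSmulLin k h))
    (fun a a' h => by
      funext n; ext v
      simp [map_add])
    (fun c a h => by
      funext n; ext v
      simp [map_smul])
    (fun a h h' => by
      funext n; ext v
      simp [hSmulLin, add_smul])
    (fun c a h => by
      funext n; ext v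
      simp [hSmulLin, smul_assoc])

@[simp] lemma smashYM_tmul (F : VAData k V) (a : V) (h : H) (n : ℤ) (b : V) :
    smashYM F (a ⊗ₜ[k] h) n b = F.Y a n (h • b) := rfl

/-- The smash module data. -/
noncomputable def smashMod (F : VAData k V) : VModData k (V ⊗[k] H) V :=
  ⟨smashYM F, F.T⟩

lemma smashMod_trunc (F : VAData k V)
    (htr : ∀ a b : V, ∃ N : ℤ, ∀ n : ℤ, N ≤ n → F.Y a n b = 0)
    (u : V ⊗[k] H) (x : V) :
    ∃ N : ℤ, ∀ n : ℤ, N ≤ n → (smashMod F).YM u n x = 0 := by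
  induction u using TensorProduct.induction_on with
  | zero => exact ⟨0, fun n _ => by simp [smashMod]⟩
  | tmul a h =>
    obtain ⟨N, hN⟩ := htr a (h • x)
    exact ⟨N, fun n hn => hN n hn⟩
  | add u v hu hv =>
    obtain ⟨N1, h1⟩ := hu
    obtain ⟨N2, h2⟩ := hv
    refine ⟨max N1 N2, fun n hn => ?_⟩
    have : (smashMod F).YM (u + v) n x = (smashMod F).YM u n x + (smashMod F).YM v n x := by
      simp [smashMod, map_add]
    rw [this, h1 n (le_trans (le_max_left _ _) hn), h2 n (le_trans (le_max_right _ _) hn),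
      add_zero]
end

section
variable {W : Type*} [AddCommGroup W] [Module k W]
  {M : Type*} [AddCommGroup M] [Module k M]

/-- Truncated form of `mcompLHS`. -/
lemma mcompLHS_eq_sum (Mo : VModData k W M) (u v : W) (x : M) (p q : ℤ) {Z : ℤ}
    (hZ : ∀ n : ℤ, Z ≤ n → Mo.YM v n x = 0) {J : ℕ} (hJ : Z + q + 1 ≤ (J : ℤ)) :
    VModData.mcompLHS Mo u v x p q
      = negOnePow q • ∑ j ∈ Finset.range J,
          ibinom (p + (j : ℤ)) j • Mo.YM u (-p - 1 - (j : ℤ)) (Mo.YM v ((j : ℤ) - 1 - q) x) := by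
  unfold VModData.mcompLHS
  congr 1
  apply finsum_eq_sum_of_support_subset
  intro j hj
  simp only [Finset.coe_range, Set.mem_Iio]
  by_contra hcon
  push_neg at hcon
  have : Z ≤ (j : ℤ) - 1 - q := by
    have : (J : ℤ) ≤ (j : ℤ) := by exact_mod_cast hcon
    omega
  apply Function.mem_support.mp hj
  rw [hZ _ this, map_zero, smul_zero]

/-- Truncated form of `compLHS`. -/
lemma compLHS_eq_sum (F : VAData k V) (a b c : V) (p q : ℤ) {Z : ℤ}
    (hZ : ∀ n : ℤ, Z ≤ n → F.Y b n c = 0) {J : ℕ} (hJ : Z + q + 1 ≤ (J : ℤ)) :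
    VAData.compLHS F a b c p q
      = negOnePow q • ∑ j ∈ Finset.range J,
          ibinom (p + (j : ℤ)) j • F.Y a (-p - 1 - (j : ℤ)) (F.Y b ((j : ℤ) - 1 - q) c) := by
  unfold VAData.compLHS
  congr 1
  apply finsum_eq_sum_of_support_subset
  intro j hj
  simp only [Finset.coe_range, Set.mem_Iio]
  by_contra hcon
  push_neg at hcon
  have : Z ≤ (j : ℤ) - 1 - q := by
    have : (J : ℤ) ≤ (j : ℤ) := by exact_mod_cast hcon
    omega
  apply Function.mem_support.mp hj
  rw [hZ _ this, map_zero, smul_zero]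

end

end AuxSmash
section AuxAssoc

variable {k : Type*} [CommRing k] {V : Type*} [AddCommGroup V] [Module k V]

lemma zwMul_zero_apply (f : ℤ → ℤ → V) (p q : ℤ) : zwMul 0 f p q = f p q := by
  simp [zwMul]

section General
variable {W : Type*} [AddCommGroup W] [Module k W]
  {M : Type*} [AddCommGroup M] [Module k M]

lemma mcompLHS_zero_left (Mo : VModData k W M) (v : W) (x : M) (p q : ℤ) :
    VModData.mcompLHS Mo 0 v x p q = 0 := by
  simp [VModData.mcompLHS]

lemma mcompLHS_zero_right (Mo : VModData k W M) (u : W) (x : M) (p q : ℤ) :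
    VModData.mcompLHS Mo u 0 x p q = 0 := by
  simp [VModData.mcompLHS]

lemma mcompRHS_zero_left (FS : VAData k W) (Mo : VModData k W M) (v : W) (x : M) (p q : ℤ) :
    VModData.mcompRHS FS Mo 0 v x p q = 0 := by
  simp [VModData.mcompRHS]

lemma mcompRHS_zero_right (FS : VAData k W) (Mo : VModData k W M) (u : W) (x : M) (p q : ℤ) :
    VModData.mcompRHS FS Mo u 0 x p q = 0 := by
  simp [VModData.mcompRHS]

lemma mcompRHS_add_left (FS : VAData k W) (Mo : VModData k W M) (u1 u2 v : W) (x : M) (p q : ℤ) :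
    VModData.mcompRHS FS Mo (u1 + u2) v x p q
      = VModData.mcompRHS FS Mo u1 v x p q + VModData.mcompRHS FS Mo u2 v x p q := by
  simp [VModData.mcompRHS, map_add, smul_add]

lemma mcompRHS_add_right (FS : VAData k W) (Mo : VModData k W M) (u v1 v2 : W) (x : M) (p q : ℤ) :
    VModData.mcompRHS FS Mo u (v1 + v2) x p q
      = VModData.mcompRHS FS Mo u v1 x p q + VModData.mcompRHS FS Mo u v2 x p q := by
  simp [VModData.mcompRHS, map_add, smul_add]

lemma mcompLHS_add_left (Mo : VModData k W M) (u1 u2 v : W) (x : M)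
    (htr : ∃ Z : ℤ, ∀ n : ℤ, Z ≤ n → Mo.YM v n x = 0) (p q : ℤ) :
    VModData.mcompLHS Mo (u1 + u2) v x p q
      = VModData.mcompLHS Mo u1 v x p q + VModData.mcompLHS Mo u2 v x p q := by
  obtain ⟨Z, hZ⟩ := htr
  have hJ : Z + q + 1 ≤ ((Z + q + 1).toNat : ℤ) := Int.self_le_toNat _
  rw [mcompLHS_eq_sum Mo (u1 + u2) v x p q hZ hJ, mcompLHS_eq_sum Mo u1 v x p q hZ hJ,
    mcompLHS_eq_sum Mo u2 v x p q hZ hJ, ← smul_add, ← Finset.sum_add_distrib]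
  congr 1
  refine Finset.sum_congr rfl fun j _ => ?_
  rw [← smul_add]
  congr 1
  simp [map_add]

lemma mcompLHS_add_right (Mo : VModData k W M) (u v1 v2 : W) (x : M)
    (htr1 : ∃ Z : ℤ, ∀ n : ℤ, Z ≤ n → Mo.YM v1 n x = 0)
    (htr2 : ∃ Z : ℤ, ∀ n : ℤ, Z ≤ n → Mo.YM v2 n x = 0) (p q : ℤ) :
    VModData.mcompLHS Mo u (v1 + v2) x p q
      = VModData.mcompLHS Mo u v1 x p q + VModData.mcompLHS Mo u v2 x p q := by
  obtain ⟨Z1, hZ1⟩ := htr1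
  obtain ⟨Z2, hZ2⟩ := htr2
  have hZ1' : ∀ n : ℤ, max Z1 Z2 ≤ n → Mo.YM v1 n x = 0 :=
    fun n hn => hZ1 n (le_trans (le_max_left _ _) hn)
  have hZ2' : ∀ n : ℤ, max Z1 Z2 ≤ n → Mo.YM v2 n x = 0 :=
    fun n hn => hZ2 n (le_trans (le_max_right _ _) hn)
  have hZ : ∀ n : ℤ, max Z1 Z2 ≤ n → Mo.YM (v1 + v2) n x = 0 := by
    intro n hn
    have : Mo.YM (v1 + v2) n x = Mo.YM v1 n x + Mo.YM v2 n x := by simp [map_add]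
    rw [this, hZ1' n hn, hZ2' n hn, add_zero]
  have hJ : max Z1 Z2 + q + 1 ≤ ((max Z1 Z2 + q + 1).toNat : ℤ) := Int.self_le_toNat _
  rw [mcompLHS_eq_sum Mo u (v1 + v2) x p q hZ hJ, mcompLHS_eq_sum Mo u v1 x p q hZ1' hJ,
    mcompLHS_eq_sum Mo u v2 x p q hZ2' hJ, ← smul_add, ← Finset.sum_add_distrib]
  congr 1
  refine Finset.sum_congr rfl fun j _ => ?_
  rw [← smul_add]
  congr 1
  simp [map_add]

end General

section Smash
variable {H : Type*} [Ring H] [HopfAlgebra k H]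
variable [Module H V] [IsScalarTower k H V] [SMulCommClass k H V]

lemma smash_assoc_pure (F : VAData k V)
    (htr : ∀ a b : V, ∃ N : ℤ, ∀ n : ℤ, N ≤ n → F.Y a n b = 0)
    (hassoc : F.IsAssocFA) (hHF : IsHModuleFA H F)
    (FS : VAData k (V ⊗[k] H)) (hFS : SmashChar H F FS)
    (a : V) (h : H) (b : V) (g : H) (x : V) :
    ∃ N : ℕ, ∀ p q : ℤ,
      zwMul N (VModData.mcompLHS (smashMod F) (a ⊗ₜ[k] h) (b ⊗ₜ[k] g) x) p q
        = zwMul N (VModData.mcompRHS FS (smashMod F) (a ⊗ₜ[k] h) (b ⊗ₜ[k] g) x) p q := by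
  obtain ⟨m, h1, h2, hcom⟩ := exists_fin_rep (Coalgebra.comul (R := k) h)
  choose N hN using fun i : Fin m => hassoc a (h1 i • b) (h2 i • (g • x))
  have hL : ∀ p q : ℤ, VModData.mcompLHS (smashMod F) (a ⊗ₜ[k] h) (b ⊗ₜ[k] g) x p q
      = ∑ i, VAData.compLHS F a (h1 i • b) (h2 i • (g • x)) p q := by
    intro p q
    obtain ⟨Zb, hZb⟩ := htr b (g • x)
    choose Zi hZi using fun i : Fin m => htr (h1 i • b) (h2 i • (g • x))
    set Z : ℤ := max Zb (((Finset.univ.sup fun i => (Zi i).toNat) : ℕ) : ℤ) with hZdef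
    have hZb' : ∀ n : ℤ, Z ≤ n → (smashMod F).YM (b ⊗ₜ[k] g) n x = 0 := by
      intro n hn
      show F.Y b n (g • x) = 0
      exact hZb n (le_trans (le_max_left _ _) hn)
    have hZi' : ∀ (i : Fin m) (n : ℤ), Z ≤ n → F.Y (h1 i • b) n (h2 i • (g • x)) = 0 := by
      intro i n hn
      refine hZi i n (le_trans ?_ hn)
      calc Zi i ≤ ((Zi i).toNat : ℤ) := Int.self_le_toNat _
        _ ≤ (((Finset.univ.sup fun i => (Zi i).toNat) : ℕ) : ℤ) := by
            exact Nat.cast_le.mpr (Finset.le_sup (f := fun i => (Zi i).toNat) (Finset.mem_univ i))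
        _ ≤ Z := le_max_right _ _
    have hJ : Z + q + 1 ≤ (((Z + q + 1).toNat : ℕ) : ℤ) := Int.self_le_toNat _
    rw [mcompLHS_eq_sum (smashMod F) (a ⊗ₜ[k] h) (b ⊗ₜ[k] g) x p q hZb' hJ]
    have inner : ∀ j : ℕ,
        (smashMod F).YM (a ⊗ₜ[k] h) (-p - 1 - (j : ℤ)) ((smashMod F).YM (b ⊗ₜ[k] g) ((j : ℤ) - 1 - q) x)
          = ∑ i, F.Y a (-p - 1 - (j : ℤ)) (F.Y (h1 i • b) ((j : ℤ) - 1 - q) (h2 i • (g • x))) := by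
      intro j
      show F.Y a _ (h • F.Y b _ (g • x)) = _
      rw [hHF.2.2 h b (g • x) _ m h1 h2 hcom, map_sum]
    calc negOnePow q • ∑ j ∈ Finset.range (Z + q + 1).toNat,
          ibinom (p + (j : ℤ)) j •
            (smashMod F).YM (a ⊗ₜ[k] h) (-p - 1 - (j : ℤ))
              ((smashMod F).YM (b ⊗ₜ[k] g) ((j : ℤ) - 1 - q) x)
        = negOnePow q • ∑ j ∈ Finset.range (Z + q + 1).toNat, ∑ i,
            ibinom (p + (j : ℤ)) j •
              F.Y a (-p - 1 - (j : ℤ)) (F.Y (h1 i • b) ((j : ℤ) - 1 - q) (h2 i • (g • x))) := by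
          congr 1
          refine Finset.sum_congr rfl fun j _ => ?_
          rw [inner j, Finset.smul_sum]
      _ = ∑ i, negOnePow q • ∑ j ∈ Finset.range (Z + q + 1).toNat,
            ibinom (p + (j : ℤ)) j •
              F.Y a (-p - 1 - (j : ℤ)) (F.Y (h1 i • b) ((j : ℤ) - 1 - q) (h2 i • (g • x))) := by
          rw [Finset.sum_comm, Finset.smul_sum]
      _ = ∑ i, VAData.compLHS F a (h1 i • b) (h2 i • (g • x)) p q := by
          refine Finset.sum_congr rfl fun i _ => ?_
          exact (compLHS_eq_sum F a (h1 i • b) (h2 i • (g • x)) p q (hZi' i) hJ).symm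
  have hR : ∀ p q : ℤ, VModData.mcompRHS FS (smashMod F) (a ⊗ₜ[k] h) (b ⊗ₜ[k] g) x p q
      = ∑ i, VAData.compRHS F a (h1 i • b) (h2 i • (g • x)) p q := by
    intro p q
    unfold VModData.mcompRHS
    rw [hFS.1 a b h g (-p - 1) m h1 h2 hcom, map_sum, Finset.sum_apply, LinearMap.sum_apply,
      Finset.smul_sum]
    refine Finset.sum_congr rfl fun i _ => ?_
    unfold VAData.compRHS
    congr 1
    show F.Y (F.Y a (-p - 1) (h1 i • b)) (-q - 1) ((h2 i * g) • x) = _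
    rw [mul_smul]
  refine ⟨Finset.univ.sup N, fun p q => ?_⟩
  have eL : VModData.mcompLHS (smashMod F) (a ⊗ₜ[k] h) (b ⊗ₜ[k] g) x
      = fun p q => ∑ i, VAData.compLHS F a (h1 i • b) (h2 i • (g • x)) p q :=
    funext fun p => funext fun q => hL p q
  have eR : VModData.mcompRHS FS (smashMod F) (a ⊗ₜ[k] h) (b ⊗ₜ[k] g) x
      = fun p q => ∑ i, VAData.compRHS F a (h1 i • b) (h2 i • (g • x)) p q :=
    funext fun p => funext fun q => hR p q
  rw [eL, eR, zwMul_sum, zwMul_sum]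
  refine Finset.sum_congr rfl fun i _ => ?_
  exact zwMul_congr_of_le (Finset.le_sup (Finset.mem_univ i)) (hN i) p q

lemma smash_assoc (F : VAData k V)
    (htr : ∀ a b : V, ∃ N : ℤ, ∀ n : ℤ, N ≤ n → F.Y a n b = 0)
    (hassoc : F.IsAssocFA) (hHF : IsHModuleFA H F)
    (FS : VAData k (V ⊗[k] H)) (hFS : SmashChar H F FS)
    (u v : V ⊗[k] H) (x : V) :
    ∃ N : ℕ, ∀ p q : ℤ,
      zwMul N (VModData.mcompLHS (smashMod F) u v x) p q
        = zwMul N (VModData.mcompRHS FS (smashMod F) u v x) p q := by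
  induction v using TensorProduct.induction_on generalizing u with
  | zero =>
    refine ⟨0, fun p q => ?_⟩
    rw [zwMul_zero_apply, zwMul_zero_apply, mcompLHS_zero_right, mcompRHS_zero_right]
  | tmul b g =>
    induction u using TensorProduct.induction_on with
    | zero =>
      refine ⟨0, fun p q => ?_⟩
      rw [zwMul_zero_apply, zwMul_zero_apply, mcompLHS_zero_left, mcompRHS_zero_left]
    | tmul a h => exact smash_assoc_pure F htr hassoc hHF FS hFS a h b g x
    | add u1 u2 ih1 ih2 =>
      obtain ⟨N1, e1⟩ := ih1
      obtain ⟨N2, e2⟩ := ih2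
      refine ⟨max N1 N2, fun p q => ?_⟩
      have eL : VModData.mcompLHS (smashMod F) (u1 + u2) (b ⊗ₜ[k] g) x
          = fun p q => VModData.mcompLHS (smashMod F) u1 (b ⊗ₜ[k] g) x p q
              + VModData.mcompLHS (smashMod F) u2 (b ⊗ₜ[k] g) x p q :=
        funext fun p => funext fun q =>
          mcompLHS_add_left _ _ _ _ _ (smashMod_trunc F htr _ x) p q
      have eR : VModData.mcompRHS FS (smashMod F) (u1 + u2) (b ⊗ₜ[k] g) x
          = fun p q => VModData.mcompRHS FS (smashMod F) u1 (b ⊗ₜ[k] g) x p q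
              + VModData.mcompRHS FS (smashMod F) u2 (b ⊗ₜ[k] g) x p q :=
        funext fun p => funext fun q => mcompRHS_add_left _ _ _ _ _ _ p q
      rw [eL, eR, zwMul_add, zwMul_add,
        zwMul_congr_of_le (le_max_left N1 N2) e1 p q,
        zwMul_congr_of_le (le_max_right N1 N2) e2 p q]
  | add v1 v2 ih1 ih2 =>
    obtain ⟨N1, e1⟩ := ih1 u
    obtain ⟨N2, e2⟩ := ih2 u
    refine ⟨max N1 N2, fun p q => ?_⟩
    have eL : VModData.mcompLHS (smashMod F) u (v1 + v2) x
        = fun p q => VModData.mcompLHS (smashMod F) u v1 x p q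
            + VModData.mcompLHS (smashMod F) u v2 x p q :=
      funext fun p => funext fun q =>
        mcompLHS_add_right _ _ _ _ _ (smashMod_trunc F htr _ x) (smashMod_trunc F htr _ x) p q
    have eR : VModData.mcompRHS FS (smashMod F) u (v1 + v2) x
        = fun p q => VModData.mcompRHS FS (smashMod F) u v1 x p q
            + VModData.mcompRHS FS (smashMod F) u v2 x p q :=
      funext fun p => funext fun q => mcompRHS_add_right _ _ _ _ _ _ p q
    rw [eL, eR, zwMul_add, zwMul_add,
      zwMul_congr_of_le (le_max_left N1 N2) e1 p q,
      zwMul_congr_of_le (le_max_right N1 N2) e2 p q]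

lemma smashMod_transl (F : VAData k V)
    (hT1 : ∀ (a b : V) (n : ℤ), F.Y (F.T a) n b = F.T (F.Y a n b) - F.Y a n (F.T b))
    (hT2 : ∀ (a b : V) (n : ℤ), F.Y (F.T a) n b = (-n : ℤ) • F.Y a (n - 1) b)
    (hHT : ∀ (h : H) (a : V), h • (F.T a : V) = F.T (h • a))
    (u : V ⊗[k] H) (x : V) (n : ℤ) :
    F.T ((smashMod F).YM u n x) - (smashMod F).YM u n (F.T x)
      = (-n : ℤ) • (smashMod F).YM u (n - 1) x := by
  induction u using TensorProduct.induction_on with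
  | zero => simp [smashMod]
  | tmul a h =>
    show F.T (F.Y a n (h • x)) - F.Y a n (h • F.T x) = (-n : ℤ) • F.Y a (n - 1) (h • x)
    rw [hHT h x, ← hT1 a (h • x) n, hT2 a (h • x) n]
  | add u v hu hv =>
    have e : ∀ (w : ℤ), (smashMod F).YM (u + v) w = (smashMod F).YM u w + (smashMod F).YM v w := by
      intro w; rw [map_add]; rfl
    simp only [e, LinearMap.add_apply, map_add]
    rw [smul_add, ← hu, ← hv]
    abel

end Smash

end AuxAssoc
end HopfVA
namespace HopfVA

/-- `(V, Y^V, s)` with `Y^V(a⊗h,z)b := Y(a,z)(hb)` is a left module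
over the field algebra `V ⊗ H` (with the smash structure `Y_H`); in particular `V` is a
left module over the fixed-point field algebra `V^H`. -/
theorem statement5 {k : Type*} [Field k] [CharZero k]
    {V : Type*} [AddCommGroup V] [Module k V]
    {H : Type*} [Ring H] [HopfAlgebra k H]
    [Module H V] [IsScalarTower k H V] [SMulCommClass k H V]
    (F : VAData k V) (hF : F.IsFieldAlgebra) (hHF : IsHModuleFA H F)
    (FS : VAData k (V ⊗[k] H)) (hFS : SmashChar H F FS) :
    (∃ Mo : VModData k (V ⊗[k] H) V,
      (∀ (a : V) (h : H) (n : ℤ) (b : V), Mo.YM (a ⊗ₜ[k] h) n b = F.Y a n (h • b)) ∧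
      Mo.sM = F.T ∧
      VModData.IsModule FS Mo) ∧
    (∀ FH : VAData k (hFixed k V H),
      ((FH.vac : V) = F.vac) →
      (∀ a : hFixed k V H, (FH.T a : V) = F.T (a : V)) →
      (∀ (a b : hFixed k V H) (m : ℤ), (FH.Y a m b : V) = F.Y (a : V) m (b : V)) →
      ∃ Mo2 : VModData k (hFixed k V H) V,
        (∀ (a : hFixed k V H) (n : ℤ) (b : V), Mo2.YM a n b = F.Y (a : V) n b) ∧
        Mo2.sM = F.T ∧
        VModData.IsModule FH Mo2) := by
  obtain ⟨⟨htr, hvacY, hcre, hm1, hm2, hT1, hT2⟩, hassoc⟩ := hF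
  constructor
  · refine ⟨smashMod F, fun a h n b => rfl, rfl, ?_, ?_, ?_, ?_⟩
    · exact fun u x => smashMod_trunc F htr u x
    · intro x n
      rw [hFS.2.1]
      show F.Y F.vac n ((1 : H) • x) = _
      rw [one_smul]
      exact hvacY x n
    · exact fun u x n => smashMod_transl F hT1 hT2 hHF.2.1 u x n
    · exact fun u v x => smash_assoc F htr hassoc hHF FS hFS u v x
  · intro FH hvacEq hTEq hYEq
    refine ⟨⟨F.Y ∘ₗ (hFixed k V H).subtype, F.T⟩, fun a n b => rfl, rfl, ?_, ?_, ?_, ?_⟩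
    · exact fun a x => htr (a : V) x
    · intro x n
      show F.Y ((FH.vac : V)) n x = _
      rw [hvacEq]
      exact hvacY x n
    · intro a x n
      show F.T (F.Y (a : V) n x) - F.Y (a : V) n (F.T x) = (-n : ℤ) • F.Y (a : V) (n - 1) x
      rw [← hT1 (a : V) x n, hT2 (a : V) x n]
    · intro a b x
      obtain ⟨N, hNe⟩ := hassoc (a : V) (b : V) x
      refine ⟨N, fun p q => ?_⟩
      have eL : VModData.mcompLHS ⟨F.Y ∘ₗ (hFixed k V H).subtype, F.T⟩ a b x
          = VAData.compLHS F (a : V) (b : V) x := rfl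
      have eR : VModData.mcompRHS FH ⟨F.Y ∘ₗ (hFixed k V H).subtype, F.T⟩ a b x
          = VAData.compRHS F (a : V) (b : V) x := by
        funext p q
        unfold VModData.mcompRHS VAData.compRHS
        congr 1
        show F.Y ((FH.Y a (-p - 1) b : hFixed k V H) : V) (-q - 1) x = _
        rw [hYEq]
      rw [eL, eR]
      exact hNe p q

end HopfVA
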